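/- arXiv:2310.12613 — 4 statements merged into one kernel-verified Lean document; each statement's English description precedes it below -/
import Mathlib

section
/- (Contextual Equivalence Lemma) Let φ be an LTL formula and (B,≺) a finite well-founded basis. Assume that for every C ⊆ B there is a formula φ_C with (i) φ and φ_C equivalent under context ⟨C,B⟩ and (ii) C ⊆ C' implies φ_C ⊨ φ_{C'}. Assume further that for every basis formula ψ ∈ B and every D ⊆ ⇓ψ there is a formula ψ_D with (iii) ψ and ψ_D equivalent under context ⟨D,⇓ψ⟩ and (iv) D ⊆ D' ⊆ ⇓ψ implies ψ_D ⊨ ψ_{D'}. Then φ ≡ ⋁_{C ⊆ B} ( φ_C ∧ ⋀_{ψ ∈ C} ψ_{C ∩ ⇓ψ} ). -/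
namespace LTLNorm

/-- LTL formulas in negation normal form. -/
inductive F (Ap : Type) : Type
  | tt    : F Ap
  | ff    : F Ap
  | pos   : Ap → F Ap
  | nlit  : Ap → F Ap
  | and   : F Ap → F Ap → F Ap
  | or    : F Ap → F Ap → F Ap
  | next  : F Ap → F Ap
  | untl  : F Ap → F Ap → F Ap
  | wuntl : F Ap → F Ap → F Ap
  | rel   : F Ap → F Ap → F Ap
  | srel  : F Ap → F Ap → F Ap
  deriving DecidableEq

/-- Infinite words over the alphabet `2^Ap`. -/
abbrev Word (Ap : Type) := ℕ → Set Ap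

/-- Suffix of a word starting at position `i`. -/
def suff {Ap : Type} (w : Word Ap) (i : ℕ) : Word Ap := fun n => w (n + i)

/-- Satisfaction relation. -/
def Sat {Ap : Type} : Word Ap → F Ap → Prop
  | _, F.tt => True
  | _, F.ff => False
  | w, F.pos a => a ∈ w 0
  | w, F.nlit a => a ∉ w 0
  | w, F.and φ ψ => Sat w φ ∧ Sat w ψ
  | w, F.or φ ψ => Sat w φ ∨ Sat w ψ
  | w, F.next φ => Sat (suff w 1) φ
  | w, F.untl φ ψ => ∃ k, Sat (suff w k) ψ ∧ ∀ j < k, Sat (suff w j) φ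
  | w, F.wuntl φ ψ => (∀ k, Sat (suff w k) φ) ∨ ∃ k, Sat (suff w k) ψ ∧ ∀ j < k, Sat (suff w j) φ
  | w, F.srel φ ψ => ∃ k, Sat (suff w k) φ ∧ ∀ j ≤ k, Sat (suff w j) ψ
  | w, F.rel φ ψ => (∀ k, Sat (suff w k) ψ) ∨ ∃ k, Sat (suff w k) φ ∧ ∀ j ≤ k, Sat (suff w j) ψ

/-- Equivalence of formulas. -/
def Equiv {Ap : Type} (φ ψ : F Ap) : Prop := ∀ w : Word Ap, Sat w φ ↔ Sat w ψ

/-- Entailment: every word satisfying `φ` satisfies `ψ`. -/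
def Entails {Ap : Type} (φ ψ : F Ap) : Prop := ∀ w : Word Ap, Sat w φ → Sat w ψ

/-- F φ := tt U φ -/
def Ff {Ap : Type} (φ : F Ap) : F Ap := F.untl F.tt φ
/-- G φ := φ W ff -/
def Gf {Ap : Type} (φ : F Ap) : F Ap := F.wuntl φ F.ff
/-- GF φ := G (F φ) -/
def GFf {Ap : Type} (φ : F Ap) : F Ap := Gf (Ff φ)
/-- FG φ := F (G φ) -/
def FGf {Ap : Type} (φ : F Ap) : F Ap := Ff (Gf φ)

/-- Number of nodes of the syntax tree. -/
def size {Ap : Type} : F Ap → ℕ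
  | F.tt => 1
  | F.ff => 1
  | F.pos _ => 1
  | F.nlit _ => 1
  | F.and φ ψ => size φ + size ψ + 1
  | F.or φ ψ => size φ + size ψ + 1
  | F.next φ => size φ + 1
  | F.untl φ ψ => size φ + size ψ + 1
  | F.wuntl φ ψ => size φ + size ψ + 1
  | F.rel φ ψ => size φ + size ψ + 1
  | F.srel φ ψ => size φ + size ψ + 1

/-- The dual of a formula in negation normal form. -/
def dual {Ap : Type} : F Ap → F Ap
  | F.tt => F.ff
  | F.ff => F.tt
  | F.pos a => F.nlit a
  | F.nlit a => F.pos a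
  | F.and φ ψ => F.or (dual φ) (dual ψ)
  | F.or φ ψ => F.and (dual φ) (dual ψ)
  | F.next φ => F.next (dual φ)
  | F.untl φ ψ => F.rel (dual φ) (dual ψ)
  | F.rel φ ψ => F.untl (dual φ) (dual ψ)
  | F.wuntl φ ψ => F.srel (dual φ) (dual ψ)
  | F.srel φ ψ => F.wuntl (dual φ) (dual ψ)

/-- `LangC B C` is the set of words satisfying every formula of `C` and
no formula of `B \ C` (the language of the context `⟨C,B⟩`). -/
def LangC {Ap : Type} (B C : Finset (F Ap)) : Set (Word Ap) :=
  {w | (∀ ψ ∈ C, Sat w ψ) ∧ ∀ ψ ∈ B, ψ ∉ C → ¬ Sat w ψ}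

/-- Equivalence under the context `⟨C,B⟩`. -/
def EquivUnder {Ap : Type} (B C : Finset (F Ap)) (φ₁ φ₂ : F Ap) : Prop :=
  ∀ w ∈ LangC B C, (Sat w φ₁ ↔ Sat w φ₂)

/-- Disjunction of a list of formulas. -/
def bigOr {Ap : Type} (l : List (F Ap)) : F Ap := l.foldr F.or F.ff

/-- Conjunction of a list of formulas. -/
def bigAnd {Ap : Type} (l : List (F Ap)) : F Ap := l.foldr F.and F.tt

open Classical in
/-- `⇓ψ` relative to a basis `B` and an order `≺`. -/
noncomputable def downRel {Ap : Type} [DecidableEq Ap] (B : Finset (F Ap))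
    (prec : F Ap → F Ap → Prop) (ψ : F Ap) : Finset (F Ap) :=
  B.filter fun χ => prec χ ψ

lemma sat_bigOr {Ap : Type} (w : Word Ap) (l : List (F Ap)) :
    Sat w (bigOr l) ↔ ∃ φ ∈ l, Sat w φ := by
  induction l with
  | nil => simp [bigOr, Sat]
  | cons a t ih => simp [bigOr, Sat] at ih ⊢; rw [ih]

lemma sat_bigAnd {Ap : Type} (w : Word Ap) (l : List (F Ap)) :
    Sat w (bigAnd l) ↔ ∀ φ ∈ l, Sat w φ := by
  induction l with
  | nil => simp [bigAnd, Sat]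
  | cons a t ih => simp only [bigAnd, List.foldr] at ih ⊢; simp [Sat, ih]

/-- Contextual Equivalence Lemma. -/
theorem contextual_equivalence {Ap : Type} [Fintype Ap] [DecidableEq Ap]
    (φ : F Ap) (B : Finset (F Ap)) (prec : F Ap → F Ap → Prop)
    (hwf : (↑B : Set (F Ap)).WellFoundedOn prec)
    (htrans : Transitive prec) (hirrefl : Irreflexive prec)
    (f : Finset (F Ap) → F Ap) (g : F Ap → Finset (F Ap) → F Ap)
    (h1 : ∀ C ⊆ B, EquivUnder B C φ (f C))
    (h2 : ∀ C C' : Finset (F Ap), C ⊆ B → C' ⊆ B → C ⊆ C' → Entails (f C) (f C'))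
    (h3 : ∀ ψ ∈ B, ∀ D ⊆ downRel B prec ψ, EquivUnder (downRel B prec ψ) D ψ (g ψ D))
    (h4 : ∀ ψ ∈ B, ∀ D D' : Finset (F Ap), D ⊆ D' → D' ⊆ downRel B prec ψ →
      Entails (g ψ D) (g ψ D')) :
    Equiv φ
      (bigOr (B.powerset.toList.map fun C =>
        F.and (f C) (bigAnd (C.toList.map fun ψ => g ψ (C ∩ downRel B prec ψ))))) := by

  classical
  intro w
  rw [sat_bigOr]
  constructor
  · intro hφ
    set C : Finset (F Ap) := B.filter (fun ψ => Sat w ψ) with hC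
    have hCB : C ⊆ B := Finset.filter_subset _ _
    have hwC : w ∈ LangC B C := by
      constructor
      · intro ψ hψ; exact (Finset.mem_filter.mp hψ).2
      · intro ψ hψ hn hs; exact hn (Finset.mem_filter.mpr ⟨hψ, hs⟩)
    refine ⟨_, List.mem_map.mpr ⟨C, Finset.mem_toList.mpr (Finset.mem_powerset.mpr hCB), rfl⟩, ?_⟩
    refine ⟨(h1 C hCB w hwC).mp hφ, ?_⟩
    rw [sat_bigAnd]
    intro χ hχ
    obtain ⟨ψ, hψC, rfl⟩ := List.mem_map.mp hχ
    have hψC : ψ ∈ C := Finset.mem_toList.mp hψC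
    have hψB : ψ ∈ B := hCB hψC
    have hw' : w ∈ LangC (downRel B prec ψ) (C ∩ downRel B prec ψ) := by
      constructor
      · intro χ hχ; exact (Finset.mem_filter.mp (Finset.mem_inter.mp hχ).1).2
      · intro χ hχd hn hs
        exact hn (Finset.mem_inter.mpr ⟨Finset.mem_filter.mpr
          ⟨(Finset.mem_filter.mp hχd).1, hs⟩, hχd⟩)
    exact (h3 ψ hψB _ Finset.inter_subset_right w hw').mp (Finset.mem_filter.mp hψC).2
  · rintro ⟨χ, hχ, hsat⟩
    obtain ⟨C, hCmem, rfl⟩ := List.mem_map.mp hχ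
    have hCB : C ⊆ B := Finset.mem_powerset.mp (Finset.mem_toList.mp hCmem)
    obtain ⟨hf, hga⟩ : Sat w (f C) ∧ Sat w (bigAnd _) := hsat
    rw [sat_bigAnd] at hga
    have key : ∀ ψ ∈ B, ψ ∈ C → Sat w ψ := by
      intro ψ hψB
      refine hwf.induction (P := fun ψ => ψ ∈ C → Sat w ψ) hψB ?_
      intro ψ hψB IH hψC
      have hg : Sat w (g ψ (C ∩ downRel B prec ψ)) :=
        hga _ (List.mem_map.mpr ⟨ψ, Finset.mem_toList.mpr hψC, rfl⟩)
      set D' : Finset (F Ap) := (downRel B prec ψ).filter (fun χ => Sat w χ) with hD'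
      have hsub : C ∩ downRel B prec ψ ⊆ D' := by
        intro χ hχ
        obtain ⟨hχC, hχd⟩ := Finset.mem_inter.mp hχ
        obtain ⟨hχB, hχp⟩ := Finset.mem_filter.mp hχd
        exact Finset.mem_filter.mpr ⟨hχd, IH χ hχB hχp hχC⟩
      have hg' : Sat w (g ψ D') :=
        h4 ψ hψB _ _ hsub (Finset.filter_subset _ _) w hg
      have hw' : w ∈ LangC (downRel B prec ψ) D' := by
        constructor
        · intro χ hχ; exact (Finset.mem_filter.mp hχ).2
        · intro χ hχd hn hs; exact hn (Finset.mem_filter.mpr ⟨hχd, hs⟩)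
      exact (h3 ψ hψB D' (Finset.filter_subset _ _) w hw').mpr hg'
    set C' : Finset (F Ap) := B.filter (fun ψ => Sat w ψ) with hC'
    have hsub : C ⊆ C' := fun ψ hψ =>
      Finset.mem_filter.mpr ⟨hCB hψ, key ψ (hCB hψ) hψ⟩
    have hf' : Sat w (f C') := h2 C C' hCB (Finset.filter_subset _ _) hsub w hf
    have hw' : w ∈ LangC B C' := by
      constructor
      · intro ψ hψ; exact (Finset.mem_filter.mp hψ).2
      · intro ψ hψ hn hs; exact hn (Finset.mem_filter.mpr ⟨hψ, hs⟩)
    exact (h1 C' (Finset.filter_subset _ _) w hw').mpr hf'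


end LTLNorm
end

section
/- Let φ be an LTL formula, let FG ψ be a basis formula in B_FG(φ), let C ⊆ ⇓ψ, let w ∈ L(C|⇓ψ), and let I be the stabilization index of w with respect to C. Then: (1) for every i ≥ I, if w_i ⊨ ψ then w_i ⊨ eval(ψ,C); and (2) for every i ≥ 0, if w_i ⊨ eval(ψ,C) then w_i ⊨ ψ. -/
namespace LTLNorm

variable {Ap : Type} [DecidableEq Ap]

/-- The set of subformulas of a formula. -/
def sf : F Ap → Finset (F Ap)
  | F.tt => {F.tt}
  | F.ff => {F.ff}
  | F.pos a => {F.pos a}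
  | F.nlit a => {F.nlit a}
  | F.and φ ψ => insert (F.and φ ψ) (sf φ ∪ sf ψ)
  | F.or φ ψ => insert (F.or φ ψ) (sf φ ∪ sf ψ)
  | F.next φ => insert (F.next φ) (sf φ)
  | F.untl φ ψ => insert (F.untl φ ψ) (sf φ ∪ sf ψ)
  | F.wuntl φ ψ => insert (F.wuntl φ ψ) (sf φ ∪ sf ψ)
  | F.rel φ ψ => insert (F.rel φ ψ) (sf φ ∪ sf ψ)
  | F.srel φ ψ => insert (F.srel φ ψ) (sf φ ∪ sf ψ)

/-- `B_GF(φ) = { GF ψ : χ U ψ or ψ M χ is a subformula of φ }`. -/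
def BGF (φ : F Ap) : Finset (F Ap) :=
  (sf φ).biUnion fun σ =>
    match σ with
    | F.untl _ ψ => {GFf ψ}
    | F.srel ψ _ => {GFf ψ}
    | _ => ∅

/-- `B_FG(φ) = { FG ψ : χ W ψ or ψ R χ is a subformula of φ }`. -/
def BFG (φ : F Ap) : Finset (F Ap) :=
  (sf φ).biUnion fun σ =>
    match σ with
    | F.wuntl _ ψ => {FGf ψ}
    | F.rel ψ _ => {FGf ψ}
    | _ => ∅

/-- The basis `B(φ) = B_GF(φ) ∪ B_FG(φ)`. -/
def Bset (φ : F Ap) : Finset (F Ap) := BGF φ ∪ BFG φ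

/-- The argument of a basis formula: `GF ψ ↦ ψ` and `FG ψ ↦ ψ`. -/
def innerArg : F Ap → F Ap
  | F.wuntl (F.untl F.tt ψ) F.ff => ψ      -- GF ψ
  | F.untl F.tt (F.wuntl ψ F.ff) => ψ      -- FG ψ
  | φ => φ

/-- `⇓ψ`: the basis formulas of `B(φ0)` strictly below `op(ψ)` in the order `≺`,
i.e. those whose argument is a subformula of `ψ`. -/
def down (φ0 ψ : F Ap) : Finset (F Ap) :=
  (Bset φ0).filter fun χ => innerArg χ ∈ sf ψ

/-- The formula `eval(ψ, C)`. -/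
def eval (C : Finset (F Ap)) : F Ap → F Ap
  | F.tt => F.tt
  | F.ff => F.ff
  | F.pos a => F.pos a
  | F.nlit a => F.nlit a
  | F.and φ ψ => F.and (eval C φ) (eval C ψ)
  | F.or φ ψ => F.or (eval C φ) (eval C ψ)
  | F.next φ => F.next (eval C φ)
  | F.wuntl φ ψ => F.wuntl (eval C φ) (eval C ψ)
  | F.rel φ ψ => F.rel (eval C φ) (eval C ψ)
  | F.untl φ ψ => if GFf ψ ∈ C then F.wuntl (eval C φ) (eval C ψ) else F.ff
  | F.srel φ ψ => if GFf φ ∈ C then F.rel (eval C φ) (eval C ψ) else F.ff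

/-- `I` is the stabilization index of `w` with respect to `C` (relative to the
basis `B`): the least `I ≥ 0` such that for every `j ≥ 0` and every formula
`GF χ ∈ B \ C`, the suffix `w_{I+j}` does not satisfy `χ`. -/
def IsStabIndex (B C : Finset (F Ap)) (w : Word Ap) (I : ℕ) : Prop :=
  (∀ (j : ℕ) (χ : F Ap), GFf χ ∈ B → GFf χ ∉ C → ¬ Sat (suff w (I + j)) χ) ∧
  ∀ I' : ℕ, (∀ (j : ℕ) (χ : F Ap), GFf χ ∈ B → GFf χ ∉ C → ¬ Sat (suff w (I' + j)) χ) →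
    I ≤ I'

lemma suff_suff (w : Word Ap) (i k : ℕ) : suff (suff w i) k = suff w (k + i) :=
  funext fun n => congrArg w (by omega)

lemma mem_sf_self (χ : F Ap) : χ ∈ sf χ := by
  cases χ <;> simp [sf]

lemma sf_trans : ∀ {ψ χ : F Ap}, χ ∈ sf ψ → sf χ ⊆ sf ψ := by
  intro ψ
  induction ψ with
  | tt => intro χ h; simp [sf] at h; subst h; simp
  | ff => intro χ h; simp [sf] at h; subst h; simp
  | pos a => intro χ h; simp [sf] at h; subst h; simp
  | nlit a => intro χ h; simp [sf] at h; subst h; simp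
  | next a iha =>
    intro χ h
    simp only [sf, Finset.mem_insert] at h
    rcases h with rfl | h
    · exact Finset.Subset.refl _
    · exact (iha h).trans (by intro x hx; simp [sf, hx])
  | and a b iha ihb =>
    intro χ h
    simp only [sf, Finset.mem_insert, Finset.mem_union] at h
    rcases h with rfl | h | h
    · exact Finset.Subset.refl _
    · exact (iha h).trans (by intro x hx; simp [sf, hx])
    · exact (ihb h).trans (by intro x hx; simp [sf, hx])
  | or a b iha ihb =>
    intro χ h
    simp only [sf, Finset.mem_insert, Finset.mem_union] at h
    rcases h with rfl | h | h
    · exact Finset.Subset.refl _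
    · exact (iha h).trans (by intro x hx; simp [sf, hx])
    · exact (ihb h).trans (by intro x hx; simp [sf, hx])
  | untl a b iha ihb =>
    intro χ h
    simp only [sf, Finset.mem_insert, Finset.mem_union] at h
    rcases h with rfl | h | h
    · exact Finset.Subset.refl _
    · exact (iha h).trans (by intro x hx; simp [sf, hx])
    · exact (ihb h).trans (by intro x hx; simp [sf, hx])
  | wuntl a b iha ihb =>
    intro χ h
    simp only [sf, Finset.mem_insert, Finset.mem_union] at h
    rcases h with rfl | h | h
    · exact Finset.Subset.refl _
    · exact (iha h).trans (by intro x hx; simp [sf, hx])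
    · exact (ihb h).trans (by intro x hx; simp [sf, hx])
  | rel a b iha ihb =>
    intro χ h
    simp only [sf, Finset.mem_insert, Finset.mem_union] at h
    rcases h with rfl | h | h
    · exact Finset.Subset.refl _
    · exact (iha h).trans (by intro x hx; simp [sf, hx])
    · exact (ihb h).trans (by intro x hx; simp [sf, hx])
  | srel a b iha ihb =>
    intro χ h
    simp only [sf, Finset.mem_insert, Finset.mem_union] at h
    rcases h with rfl | h | h
    · exact Finset.Subset.refl _
    · exact (iha h).trans (by intro x hx; simp [sf, hx])
    · exact (ihb h).trans (by intro x hx; simp [sf, hx])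

lemma untl_down {φ ψ a b : F Ap} (hψsf : ψ ∈ sf φ) (h : F.untl a b ∈ sf ψ) :
    GFf b ∈ down φ ψ := by
  have hφ : F.untl a b ∈ sf φ := sf_trans hψsf h
  have hb : b ∈ sf ψ := sf_trans h (by simp [sf, mem_sf_self])
  refine Finset.mem_filter.2 ⟨Finset.mem_union_left _ ?_, ?_⟩
  · exact Finset.mem_biUnion.2 ⟨F.untl a b, hφ, by simp⟩
  · show innerArg (GFf b) ∈ sf ψ
    simpa [innerArg, GFf, Gf, Ff] using hb

lemma srel_down {φ ψ a b : F Ap} (hψsf : ψ ∈ sf φ) (h : F.srel a b ∈ sf ψ) :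
    GFf a ∈ down φ ψ := by
  have hφ : F.srel a b ∈ sf φ := sf_trans hψsf h
  have ha : a ∈ sf ψ := sf_trans h (by simp [sf, mem_sf_self])
  refine Finset.mem_filter.2 ⟨Finset.mem_union_left _ ?_, ?_⟩
  · exact Finset.mem_biUnion.2 ⟨F.srel a b, hφ, by simp⟩
  · show innerArg (GFf a) ∈ sf ψ
    simpa [innerArg, GFf, Gf, Ff] using ha

lemma gf_inf {w : Word Ap} {χ : F Ap} (h : Sat w (GFf χ)) (n : ℕ) :
    ∃ m, Sat (suff w (m + n)) χ := by
  rcases h with h | ⟨k, hk, _⟩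
  · rcases h n with ⟨m, hm, _⟩
    exact ⟨m, by rwa [suff_suff] at hm⟩
  · exact hk.elim

lemma eval_main (φ ψ : F Ap) (hψsf : ψ ∈ sf φ) (C : Finset (F Ap))
    (w : Word Ap) (hw : w ∈ LangC (down φ ψ) C) (I : ℕ)
    (hstab : ∀ (j : ℕ) (χ : F Ap), GFf χ ∈ down φ ψ → GFf χ ∉ C →
      ¬ Sat (suff w (I + j)) χ) :
    ∀ χ : F Ap, χ ∈ sf ψ →
      (∀ i, I ≤ i → Sat (suff w i) χ → Sat (suff w i) (eval C χ)) ∧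
      (∀ i, Sat (suff w i) (eval C χ) → Sat (suff w i) χ) := by
  intro χ
  induction χ with
  | tt => exact fun _ => ⟨fun _ _ h => h, fun _ h => h⟩
  | ff => exact fun _ => ⟨fun _ _ h => h, fun _ h => h⟩
  | pos a => exact fun _ => ⟨fun _ _ h => h, fun _ h => h⟩
  | nlit a => exact fun _ => ⟨fun _ _ h => h, fun _ h => h⟩
  | and a b iha ihb =>
    intro hmem
    have ha := iha (sf_trans hmem (by simp [sf, mem_sf_self]))
    have hb := ihb (sf_trans hmem (by simp [sf, mem_sf_self]))
    exact ⟨fun i hi hs => ⟨ha.1 i hi hs.1, hb.1 i hi hs.2⟩,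
      fun i hs => ⟨ha.2 i hs.1, hb.2 i hs.2⟩⟩
  | or a b iha ihb =>
    intro hmem
    have ha := iha (sf_trans hmem (by simp [sf, mem_sf_self]))
    have hb := ihb (sf_trans hmem (by simp [sf, mem_sf_self]))
    refine ⟨fun i hi hs => ?_, fun i hs => ?_⟩
    · exact hs.elim (fun h => Or.inl (ha.1 i hi h)) (fun h => Or.inr (hb.1 i hi h))
    · exact hs.elim (fun h => Or.inl (ha.2 i h)) (fun h => Or.inr (hb.2 i h))
  | next a iha =>
    intro hmem
    have ha := iha (sf_trans hmem (by simp [sf, mem_sf_self]))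
    refine ⟨fun i hi hs => ?_, fun i hs => ?_⟩
    · show Sat (suff (suff w i) 1) (eval C a)
      rw [suff_suff]
      exact ha.1 _ (by omega) (by rw [← suff_suff]; exact hs)
    · show Sat (suff (suff w i) 1) a
      rw [suff_suff]
      exact ha.2 _ (by rw [← suff_suff]; exact hs)
  | wuntl a b iha ihb =>
    intro hmem
    have ha := iha (sf_trans hmem (by simp [sf, mem_sf_self]))
    have hb := ihb (sf_trans hmem (by simp [sf, mem_sf_self]))
    refine ⟨fun i hi hs => ?_, fun i hs => ?_⟩
    · rcases hs with h | ⟨k, hk, hj⟩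
      · exact Or.inl fun k => by
          rw [suff_suff]
          exact ha.1 _ (by omega) (by rw [← suff_suff]; exact h k)
      · refine Or.inr ⟨k, ?_, fun j hj' => ?_⟩
        · rw [suff_suff]
          exact hb.1 _ (by omega) (by rw [← suff_suff]; exact hk)
        · rw [suff_suff]
          exact ha.1 _ (by omega) (by rw [← suff_suff]; exact hj j hj')
    · rcases hs with h | ⟨k, hk, hj⟩
      · exact Or.inl fun k => by
          rw [suff_suff]
          exact ha.2 _ (by rw [← suff_suff]; exact h k)
      · refine Or.inr ⟨k, ?_, fun j hj' => ?_⟩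
        · rw [suff_suff]
          exact hb.2 _ (by rw [← suff_suff]; exact hk)
        · rw [suff_suff]
          exact ha.2 _ (by rw [← suff_suff]; exact hj j hj')
  | rel a b iha ihb =>
    intro hmem
    have ha := iha (sf_trans hmem (by simp [sf, mem_sf_self]))
    have hb := ihb (sf_trans hmem (by simp [sf, mem_sf_self]))
    refine ⟨fun i hi hs => ?_, fun i hs => ?_⟩
    · rcases hs with h | ⟨k, hk, hj⟩
      · exact Or.inl fun k => by
          rw [suff_suff]
          exact hb.1 _ (by omega) (by rw [← suff_suff]; exact h k)
      · refine Or.inr ⟨k, ?_, fun j hj' => ?_⟩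
        · rw [suff_suff]
          exact ha.1 _ (by omega) (by rw [← suff_suff]; exact hk)
        · rw [suff_suff]
          exact hb.1 _ (by omega) (by rw [← suff_suff]; exact hj j hj')
    · rcases hs with h | ⟨k, hk, hj⟩
      · exact Or.inl fun k => by
          rw [suff_suff]
          exact hb.2 _ (by rw [← suff_suff]; exact h k)
      · refine Or.inr ⟨k, ?_, fun j hj' => ?_⟩
        · rw [suff_suff]
          exact ha.2 _ (by rw [← suff_suff]; exact hk)
        · rw [suff_suff]
          exact hb.2 _ (by rw [← suff_suff]; exact hj j hj')
  | untl a b iha ihb =>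
    intro hmem
    have ha := iha (sf_trans hmem (by simp [sf, mem_sf_self]))
    have hb := ihb (sf_trans hmem (by simp [sf, mem_sf_self]))
    have hGF : GFf b ∈ down φ ψ := untl_down hψsf hmem
    refine ⟨fun i hi hs => ?_, fun i hs => ?_⟩
    · rcases hs with ⟨k, hk, hj⟩
      have hk' : Sat (suff w (k + i)) b := by rw [← suff_suff]; exact hk
      have hCmem : GFf b ∈ C := by
        by_contra hnc
        have := hstab (k + i - I) b hGF hnc
        rw [show I + (k + i - I) = k + i from by omega] at this
        exact this hk'
      show Sat (suff w i) (eval C (F.untl a b))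
      simp only [eval, if_pos hCmem]
      refine Or.inr ⟨k, ?_, fun j hj' => ?_⟩
      · rw [suff_suff]
        exact hb.1 _ (by omega) hk'
      · rw [suff_suff]
        exact ha.1 _ (by omega) (by rw [← suff_suff]; exact hj j hj')
    · by_cases hCmem : GFf b ∈ C
      · simp only [eval, if_pos hCmem] at hs
        rcases hs with h | ⟨k, hk, hj⟩
        · have hsatGF : Sat w (GFf b) := hw.1 _ hCmem
          obtain ⟨m, hm⟩ := gf_inf hsatGF i
          refine ⟨m, by rw [suff_suff]; exact hm, fun j hj' => ?_⟩
          rw [suff_suff]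
          exact ha.2 _ (by rw [← suff_suff]; exact h j)
        · refine ⟨k, ?_, fun j hj' => ?_⟩
          · rw [suff_suff]
            exact hb.2 _ (by rw [← suff_suff]; exact hk)
          · rw [suff_suff]
            exact ha.2 _ (by rw [← suff_suff]; exact hj j hj')
      · simp only [eval, if_neg hCmem] at hs
        exact hs.elim
  | srel a b iha ihb =>
    intro hmem
    have ha := iha (sf_trans hmem (by simp [sf, mem_sf_self]))
    have hb := ihb (sf_trans hmem (by simp [sf, mem_sf_self]))
    have hGF : GFf a ∈ down φ ψ := srel_down hψsf hmem
    refine ⟨fun i hi hs => ?_, fun i hs => ?_⟩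
    · rcases hs with ⟨k, hk, hj⟩
      have hk' : Sat (suff w (k + i)) a := by rw [← suff_suff]; exact hk
      have hCmem : GFf a ∈ C := by
        by_contra hnc
        have := hstab (k + i - I) a hGF hnc
        rw [show I + (k + i - I) = k + i from by omega] at this
        exact this hk'
      show Sat (suff w i) (eval C (F.srel a b))
      simp only [eval, if_pos hCmem]
      refine Or.inr ⟨k, ?_, fun j hj' => ?_⟩
      · rw [suff_suff]
        exact ha.1 _ (by omega) hk'
      · rw [suff_suff]
        exact hb.1 _ (by omega) (by rw [← suff_suff]; exact hj j hj')
    · by_cases hCmem : GFf a ∈ C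
      · simp only [eval, if_pos hCmem] at hs
        rcases hs with h | ⟨k, hk, hj⟩
        · have hsatGF : Sat w (GFf a) := hw.1 _ hCmem
          obtain ⟨m, hm⟩ := gf_inf hsatGF i
          refine ⟨m, by rw [suff_suff]; exact hm, fun j hj' => ?_⟩
          rw [suff_suff]
          exact hb.2 _ (by rw [← suff_suff]; exact h j)
        · refine ⟨k, ?_, fun j hj' => ?_⟩
          · rw [suff_suff]
            exact ha.2 _ (by rw [← suff_suff]; exact hk)
          · rw [suff_suff]
            exact hb.2 _ (by rw [← suff_suff]; exact hj j hj')
      · simp only [eval, if_neg hCmem] at hs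
        exact hs.elim

lemma mem_sf_of_BFG {φ ψ : F Ap} (hψ : FGf ψ ∈ BFG φ) : ψ ∈ sf φ := by
  rw [BFG, Finset.mem_biUnion] at hψ
  obtain ⟨σ, hσ, hσ2⟩ := hψ
  cases σ <;> simp [FGf, Ff, Gf] at hσ2
  · obtain ⟨-, rfl⟩ := hσ2
    exact sf_trans hσ (by simp [sf, mem_sf_self])
  · obtain ⟨rfl, -⟩ := hσ2
    exact sf_trans hσ (by simp [sf, mem_sf_self])

/-- relation between `ψ` and `eval(ψ,C)` beyond the stabilization
index, for a basis formula `FG ψ ∈ B_FG(φ)`. -/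
theorem eval_technical_lemma {Ap : Type} [Fintype Ap] [DecidableEq Ap]
    (φ ψ : F Ap) (hψ : FGf ψ ∈ BFG φ) (C : Finset (F Ap)) (hC : C ⊆ down φ ψ)
    (w : Word Ap) (hw : w ∈ LangC (down φ ψ) C) (I : ℕ)
    (hI : IsStabIndex (down φ ψ) C w I) :
    (∀ i : ℕ, I ≤ i → Sat (suff w i) ψ → Sat (suff w i) (eval C ψ)) ∧
    (∀ i : ℕ, Sat (suff w i) (eval C ψ) → Sat (suff w i) ψ) := by
  exact eval_main φ ψ (mem_sf_of_BFG hψ) C w hw I hI.1 ψ (mem_sf_self ψ)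

end LTLNorm
end

section
/- Let ψ₁ and ψ₂ be LTL formulas. (1) With B_GF := B_GF(ψ₁ W ψ₂), for every C ⊆ B_GF the formulas ψ₁ W ψ₂ and ψ₁ U (ψ₂ ∨ G(eval(ψ₁,C))) are equivalent under context ⟨C, B_GF⟩. (2) With B_GF := B_GF(ψ₁ R ψ₂), for every C ⊆ B_GF the formulas ψ₁ R ψ₂ and (ψ₁ ∨ G(eval(ψ₂,C))) M ψ₂ are equivalent under context ⟨C, B_GF⟩. -/
namespace LTLNorm

variable {Ap : Type} [DecidableEq Ap]

section AuxProof

lemma sat_untl {w : Word Ap} {φ ψ : F Ap} :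
    Sat w (F.untl φ ψ) ↔ ∃ k, Sat (suff w k) ψ ∧ ∀ j < k, Sat (suff w j) φ := Iff.rfl

lemma sat_wuntl {w : Word Ap} {φ ψ : F Ap} :
    Sat w (F.wuntl φ ψ) ↔
      (∀ k, Sat (suff w k) φ) ∨ ∃ k, Sat (suff w k) ψ ∧ ∀ j < k, Sat (suff w j) φ := Iff.rfl

lemma sat_srel {w : Word Ap} {φ ψ : F Ap} :
    Sat w (F.srel φ ψ) ↔ ∃ k, Sat (suff w k) φ ∧ ∀ j ≤ k, Sat (suff w j) ψ := Iff.rfl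

lemma sat_rel {w : Word Ap} {φ ψ : F Ap} :
    Sat w (F.rel φ ψ) ↔
      (∀ k, Sat (suff w k) ψ) ∨ ∃ k, Sat (suff w k) φ ∧ ∀ j ≤ k, Sat (suff w j) ψ := Iff.rfl

lemma sat_G {w : Word Ap} {φ : F Ap} :
    Sat w (Gf φ) ↔ ∀ k, Sat (suff w k) φ := by
  rw [Gf, sat_wuntl]
  constructor
  · rintro (h | ⟨k, hk, _⟩)
    · exact h
    · exact absurd hk id
  · exact Or.inl

lemma sat_GF {w : Word Ap} {ψ : F Ap} :
    Sat w (GFf ψ) ↔ ∀ k : ℕ, ∃ m : ℕ, Sat (suff w (m + k)) ψ := by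
  rw [GFf, sat_G]
  constructor
  · intro h k
    obtain ⟨m, hm, -⟩ := (sat_untl).1 (h k)
    exact ⟨m, by rwa [suff_suff] at hm⟩
  · intro h k
    obtain ⟨m, hm⟩ := h k
    exact sat_untl.2 ⟨m, by rwa [suff_suff], fun j _ => trivial⟩

/-- `eval C φ` entails `φ` on any word satisfying all formulas of `C`. -/
lemma evalA {C : Finset (F Ap)} {w : Word Ap}
    (Hpos : ∀ ψ : F Ap, GFf ψ ∈ C → ∀ k : ℕ, ∃ m : ℕ, Sat (suff w (m + k)) ψ) :
    ∀ (φ : F Ap) (i : ℕ), Sat (suff w i) (eval C φ) → Sat (suff w i) φ := by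
  intro φ
  induction φ with
  | tt => intro i h; trivial
  | ff => intro i h; exact h
  | pos a => intro i h; exact h
  | nlit a => intro i h; exact h
  | and φ ψ ihφ ihψ => intro i h; exact ⟨ihφ i h.1, ihψ i h.2⟩
  | or φ ψ ihφ ihψ =>
      intro i h
      rcases h with h | h
      · exact Or.inl (ihφ i h)
      · exact Or.inr (ihψ i h)
  | next φ ihφ =>
      intro i h
      have h' : Sat (suff (suff w i) 1) (eval C φ) := h
      rw [suff_suff] at h'
      show Sat (suff (suff w i) 1) φ
      rw [suff_suff]
      exact ihφ _ h'
  | untl φ ψ ihφ ihψ =>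
      intro i h
      by_cases hc : GFf ψ ∈ C
      · rw [eval, if_pos hc, sat_wuntl] at h
        rw [sat_untl]
        rcases h with h | ⟨k, hk, hj⟩
        · obtain ⟨m, hm⟩ := Hpos ψ hc i
          refine ⟨m, by rw [suff_suff]; exact hm, fun j _ => ?_⟩
          have := h j
          rw [suff_suff] at this ⊢
          exact ihφ _ this
        · refine ⟨k, ?_, fun j hjk => ?_⟩
          · rw [suff_suff] at hk ⊢; exact ihψ _ hk
          · have := hj j hjk
            rw [suff_suff] at this ⊢
            exact ihφ _ this
      · rw [eval, if_neg hc] at h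
        exact absurd h id
  | wuntl φ ψ ihφ ihψ =>
      intro i h
      rw [eval, sat_wuntl] at h
      rw [sat_wuntl]
      rcases h with h | ⟨k, hk, hj⟩
      · refine Or.inl fun k => ?_
        have := h k
        rw [suff_suff] at this ⊢
        exact ihφ _ this
      · refine Or.inr ⟨k, ?_, fun j hjk => ?_⟩
        · rw [suff_suff] at hk ⊢; exact ihψ _ hk
        · have := hj j hjk
          rw [suff_suff] at this ⊢
          exact ihφ _ this
  | rel φ ψ ihφ ihψ =>
      intro i h
      rw [eval, sat_rel] at h
      rw [sat_rel]
      rcases h with h | ⟨k, hk, hj⟩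
      · refine Or.inl fun k => ?_
        have := h k
        rw [suff_suff] at this ⊢
        exact ihψ _ this
      · refine Or.inr ⟨k, ?_, fun j hjk => ?_⟩
        · rw [suff_suff] at hk ⊢; exact ihφ _ hk
        · have := hj j hjk
          rw [suff_suff] at this ⊢
          exact ihψ _ this
  | srel φ ψ ihφ ihψ =>
      intro i h
      by_cases hc : GFf φ ∈ C
      · rw [eval, if_pos hc, sat_rel] at h
        rw [sat_srel]
        rcases h with h | ⟨k, hk, hj⟩
        · obtain ⟨m, hm⟩ := Hpos φ hc i
          refine ⟨m, by rw [suff_suff]; exact hm, fun j _ => ?_⟩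
          have := h j
          rw [suff_suff] at this ⊢
          exact ihψ _ this
        · refine ⟨k, ?_, fun j hjk => ?_⟩
          · rw [suff_suff] at hk ⊢; exact ihφ _ hk
          · have := hj j hjk
            rw [suff_suff] at this ⊢
            exact ihψ _ this
      · rw [eval, if_neg hc] at h
        exact absurd h id

/-- Eventually, `φ` entails `eval C φ` on words whose `GF`-behaviour matches `C`. -/
lemma evalB {C : Finset (F Ap)} {w : Word Ap} :
    ∀ φ : F Ap,
      (∀ χ ψ : F Ap, F.untl χ ψ ∈ sf φ → GFf ψ ∉ C →
        ∃ k, ∀ m, ¬ Sat (suff w (m + k)) ψ) →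
      (∀ χ ψ : F Ap, F.srel ψ χ ∈ sf φ → GFf ψ ∉ C →
        ∃ k, ∀ m, ¬ Sat (suff w (m + k)) ψ) →
      ∃ N, ∀ j, N ≤ j → Sat (suff w j) φ → Sat (suff w j) (eval C φ) := by
  intro φ
  induction φ with
  | tt => intro _ _; exact ⟨0, fun j _ h => h⟩
  | ff => intro _ _; exact ⟨0, fun j _ h => h⟩
  | pos a => intro _ _; exact ⟨0, fun j _ h => h⟩
  | nlit a => intro _ _; exact ⟨0, fun j _ h => h⟩
  | and φ ψ ihφ ihψ =>
      intro HU HM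
      have hsubφ : sf φ ⊆ sf (F.and φ ψ) := by
        intro x hx; rw [sf]; exact Finset.mem_insert_of_mem (Finset.mem_union_left _ hx)
      have hsubψ : sf ψ ⊆ sf (F.and φ ψ) := by
        intro x hx; rw [sf]; exact Finset.mem_insert_of_mem (Finset.mem_union_right _ hx)
      obtain ⟨N₁, h₁⟩ := ihφ (fun χ ψ' hm => HU χ ψ' (hsubφ hm)) (fun χ ψ' hm => HM χ ψ' (hsubφ hm))
      obtain ⟨N₂, h₂⟩ := ihψ (fun χ ψ' hm => HU χ ψ' (hsubψ hm)) (fun χ ψ' hm => HM χ ψ' (hsubψ hm))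
      exact ⟨max N₁ N₂, fun j hj h =>
        ⟨h₁ j (le_trans (le_max_left _ _) hj) h.1, h₂ j (le_trans (le_max_right _ _) hj) h.2⟩⟩
  | or φ ψ ihφ ihψ =>
      intro HU HM
      have hsubφ : sf φ ⊆ sf (F.or φ ψ) := by
        intro x hx; rw [sf]; exact Finset.mem_insert_of_mem (Finset.mem_union_left _ hx)
      have hsubψ : sf ψ ⊆ sf (F.or φ ψ) := by
        intro x hx; rw [sf]; exact Finset.mem_insert_of_mem (Finset.mem_union_right _ hx)
      obtain ⟨N₁, h₁⟩ := ihφ (fun χ ψ' hm => HU χ ψ' (hsubφ hm)) (fun χ ψ' hm => HM χ ψ' (hsubφ hm))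
      obtain ⟨N₂, h₂⟩ := ihψ (fun χ ψ' hm => HU χ ψ' (hsubψ hm)) (fun χ ψ' hm => HM χ ψ' (hsubψ hm))
      refine ⟨max N₁ N₂, fun j hj h => ?_⟩
      rcases h with h | h
      · exact Or.inl (h₁ j (le_trans (le_max_left _ _) hj) h)
      · exact Or.inr (h₂ j (le_trans (le_max_right _ _) hj) h)
  | next φ ihφ =>
      intro HU HM
      have hsubφ : sf φ ⊆ sf (F.next φ) := by
        intro x hx; rw [sf]; exact Finset.mem_insert_of_mem hx
      obtain ⟨N, h₁⟩ := ihφ (fun χ ψ' hm => HU χ ψ' (hsubφ hm)) (fun χ ψ' hm => HM χ ψ' (hsubφ hm))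
      refine ⟨N, fun j hj h => ?_⟩
      have h' : Sat (suff (suff w j) 1) φ := h
      rw [suff_suff] at h'
      show Sat (suff (suff w j) 1) (eval C φ)
      rw [suff_suff]
      exact h₁ _ (le_trans hj (Nat.le_add_left _ _)) h'
  | untl φ ψ ihφ ihψ =>
      intro HU HM
      have hsubφ : sf φ ⊆ sf (F.untl φ ψ) := by
        intro x hx; rw [sf]; exact Finset.mem_insert_of_mem (Finset.mem_union_left _ hx)
      have hsubψ : sf ψ ⊆ sf (F.untl φ ψ) := by
        intro x hx; rw [sf]; exact Finset.mem_insert_of_mem (Finset.mem_union_right _ hx)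
      obtain ⟨N₁, h₁⟩ := ihφ (fun χ ψ' hm => HU χ ψ' (hsubφ hm)) (fun χ ψ' hm => HM χ ψ' (hsubφ hm))
      obtain ⟨N₂, h₂⟩ := ihψ (fun χ ψ' hm => HU χ ψ' (hsubψ hm)) (fun χ ψ' hm => HM χ ψ' (hsubψ hm))
      by_cases hc : GFf ψ ∈ C
      · refine ⟨max N₁ N₂, fun j hj h => ?_⟩
        rw [eval, if_pos hc, sat_wuntl]
        rw [sat_untl] at h
        obtain ⟨k, hk, hlt⟩ := h
        refine Or.inr ⟨k, ?_, fun i hik => ?_⟩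
        · rw [suff_suff] at hk ⊢
          exact h₂ _ (le_trans (le_trans (le_max_right _ _) hj) (Nat.le_add_left _ _)) hk
        · have := hlt i hik
          rw [suff_suff] at this ⊢
          exact h₁ _ (le_trans (le_trans (le_max_left _ _) hj) (Nat.le_add_left _ _)) this
      · have hself : F.untl φ ψ ∈ sf (F.untl φ ψ) := by rw [sf]; exact Finset.mem_insert_self _ _
        obtain ⟨k₀, hk₀⟩ := HU φ ψ hself hc
        refine ⟨k₀, fun j hj h => ?_⟩
        rw [sat_untl] at h
        obtain ⟨k, hk, -⟩ := h
        rw [suff_suff] at hk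
        exfalso
        have hge : k₀ ≤ k + j := le_trans hj (Nat.le_add_left _ _)
        have := hk₀ (k + j - k₀)
        rw [Nat.sub_add_cancel hge] at this
        exact this hk
  | wuntl φ ψ ihφ ihψ =>
      intro HU HM
      have hsubφ : sf φ ⊆ sf (F.wuntl φ ψ) := by
        intro x hx; rw [sf]; exact Finset.mem_insert_of_mem (Finset.mem_union_left _ hx)
      have hsubψ : sf ψ ⊆ sf (F.wuntl φ ψ) := by
        intro x hx; rw [sf]; exact Finset.mem_insert_of_mem (Finset.mem_union_right _ hx)
      obtain ⟨N₁, h₁⟩ := ihφ (fun χ ψ' hm => HU χ ψ' (hsubφ hm)) (fun χ ψ' hm => HM χ ψ' (hsubφ hm))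
      obtain ⟨N₂, h₂⟩ := ihψ (fun χ ψ' hm => HU χ ψ' (hsubψ hm)) (fun χ ψ' hm => HM χ ψ' (hsubψ hm))
      refine ⟨max N₁ N₂, fun j hj h => ?_⟩
      rw [eval, sat_wuntl]
      rw [sat_wuntl] at h
      rcases h with h | ⟨k, hk, hlt⟩
      · refine Or.inl fun k => ?_
        have := h k
        rw [suff_suff] at this ⊢
        exact h₁ _ (le_trans (le_trans (le_max_left _ _) hj) (Nat.le_add_left _ _)) this
      · refine Or.inr ⟨k, ?_, fun i hik => ?_⟩
        · rw [suff_suff] at hk ⊢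
          exact h₂ _ (le_trans (le_trans (le_max_right _ _) hj) (Nat.le_add_left _ _)) hk
        · have := hlt i hik
          rw [suff_suff] at this ⊢
          exact h₁ _ (le_trans (le_trans (le_max_left _ _) hj) (Nat.le_add_left _ _)) this
  | rel φ ψ ihφ ihψ =>
      intro HU HM
      have hsubφ : sf φ ⊆ sf (F.rel φ ψ) := by
        intro x hx; rw [sf]; exact Finset.mem_insert_of_mem (Finset.mem_union_left _ hx)
      have hsubψ : sf ψ ⊆ sf (F.rel φ ψ) := by
        intro x hx; rw [sf]; exact Finset.mem_insert_of_mem (Finset.mem_union_right _ hx)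
      obtain ⟨N₁, h₁⟩ := ihφ (fun χ ψ' hm => HU χ ψ' (hsubφ hm)) (fun χ ψ' hm => HM χ ψ' (hsubφ hm))
      obtain ⟨N₂, h₂⟩ := ihψ (fun χ ψ' hm => HU χ ψ' (hsubψ hm)) (fun χ ψ' hm => HM χ ψ' (hsubψ hm))
      refine ⟨max N₁ N₂, fun j hj h => ?_⟩
      rw [eval, sat_rel]
      rw [sat_rel] at h
      rcases h with h | ⟨k, hk, hle⟩
      · refine Or.inl fun k => ?_
        have := h k
        rw [suff_suff] at this ⊢
        exact h₂ _ (le_trans (le_trans (le_max_right _ _) hj) (Nat.le_add_left _ _)) this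
      · refine Or.inr ⟨k, ?_, fun i hik => ?_⟩
        · rw [suff_suff] at hk ⊢
          exact h₁ _ (le_trans (le_trans (le_max_left _ _) hj) (Nat.le_add_left _ _)) hk
        · have := hle i hik
          rw [suff_suff] at this ⊢
          exact h₂ _ (le_trans (le_trans (le_max_right _ _) hj) (Nat.le_add_left _ _)) this
  | srel φ ψ ihφ ihψ =>
      intro HU HM
      have hsubφ : sf φ ⊆ sf (F.srel φ ψ) := by
        intro x hx; rw [sf]; exact Finset.mem_insert_of_mem (Finset.mem_union_left _ hx)
      have hsubψ : sf ψ ⊆ sf (F.srel φ ψ) := by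
        intro x hx; rw [sf]; exact Finset.mem_insert_of_mem (Finset.mem_union_right _ hx)
      obtain ⟨N₁, h₁⟩ := ihφ (fun χ ψ' hm => HU χ ψ' (hsubφ hm)) (fun χ ψ' hm => HM χ ψ' (hsubφ hm))
      obtain ⟨N₂, h₂⟩ := ihψ (fun χ ψ' hm => HU χ ψ' (hsubψ hm)) (fun χ ψ' hm => HM χ ψ' (hsubψ hm))
      by_cases hc : GFf φ ∈ C
      · refine ⟨max N₁ N₂, fun j hj h => ?_⟩
        rw [eval, if_pos hc, sat_rel]
        rw [sat_srel] at h
        obtain ⟨k, hk, hle⟩ := h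
        refine Or.inr ⟨k, ?_, fun i hik => ?_⟩
        · rw [suff_suff] at hk ⊢
          exact h₁ _ (le_trans (le_trans (le_max_left _ _) hj) (Nat.le_add_left _ _)) hk
        · have := hle i hik
          rw [suff_suff] at this ⊢
          exact h₂ _ (le_trans (le_trans (le_max_right _ _) hj) (Nat.le_add_left _ _)) this
      · have hself : F.srel φ ψ ∈ sf (F.srel φ ψ) := by rw [sf]; exact Finset.mem_insert_self _ _
        obtain ⟨k₀, hk₀⟩ := HM ψ φ hself hc
        refine ⟨k₀, fun j hj h => ?_⟩
        rw [sat_srel] at h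
        obtain ⟨k, hk, -⟩ := h
        rw [suff_suff] at hk
        exfalso
        have hge : k₀ ≤ k + j := le_trans hj (Nat.le_add_left _ _)
        have := hk₀ (k + j - k₀)
        rw [Nat.sub_add_cancel hge] at this
        exact this hk

lemma mem_BGF_of_untl {φ₀ χ ψ : F Ap} (h : F.untl χ ψ ∈ sf φ₀) : GFf ψ ∈ BGF φ₀ := by
  rw [BGF, Finset.mem_biUnion]
  exact ⟨F.untl χ ψ, h, by simp⟩

lemma mem_BGF_of_srel {φ₀ χ ψ : F Ap} (h : F.srel ψ χ ∈ sf φ₀) : GFf ψ ∈ BGF φ₀ := by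
  rw [BGF, Finset.mem_biUnion]
  exact ⟨F.srel ψ χ, h, by simp⟩

end AuxProof

/-- contextual unrollings of `W` and `R`. -/
theorem flatten_WR_lemma {Ap : Type} [Fintype Ap] [DecidableEq Ap] (ψ₁ ψ₂ : F Ap) :
    (∀ C ⊆ BGF (F.wuntl ψ₁ ψ₂),
      EquivUnder (BGF (F.wuntl ψ₁ ψ₂)) C (F.wuntl ψ₁ ψ₂)
        (F.untl ψ₁ (F.or ψ₂ (Gf (eval C ψ₁))))) ∧
    (∀ C ⊆ BGF (F.rel ψ₁ ψ₂),
      EquivUnder (BGF (F.rel ψ₁ ψ₂)) C (F.rel ψ₁ ψ₂)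
        (F.srel (F.or ψ₁ (Gf (eval C ψ₂))) ψ₂)) := by
  constructor
  · -- W case
    intro C hC w hw
    obtain ⟨hpos, hneg⟩ := hw
    have Hpos : ∀ ψ : F Ap, GFf ψ ∈ C → ∀ k, ∃ m, Sat (suff w (m + k)) ψ :=
      fun ψ hψ k => sat_GF.1 (hpos _ hψ) k
    have hsub : sf ψ₁ ⊆ sf (F.wuntl ψ₁ ψ₂) := by
      intro x hx; rw [sf]; exact Finset.mem_insert_of_mem (Finset.mem_union_left _ hx)
    have HU : ∀ χ ψ : F Ap, F.untl χ ψ ∈ sf ψ₁ → GFf ψ ∉ C →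
        ∃ k, ∀ m, ¬ Sat (suff w (m + k)) ψ := by
      intro χ ψ hm hn
      have hmem : GFf ψ ∈ BGF (F.wuntl ψ₁ ψ₂) := mem_BGF_of_untl (hsub hm)
      have hns := hneg _ hmem hn
      rw [sat_GF] at hns
      push_neg at hns
      exact hns
    have HM : ∀ χ ψ : F Ap, F.srel ψ χ ∈ sf ψ₁ → GFf ψ ∉ C →
        ∃ k, ∀ m, ¬ Sat (suff w (m + k)) ψ := by
      intro χ ψ hm hn
      have hmem : GFf ψ ∈ BGF (F.wuntl ψ₁ ψ₂) := mem_BGF_of_srel (hsub hm)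
      have hns := hneg _ hmem hn
      rw [sat_GF] at hns
      push_neg at hns
      exact hns
    constructor
    · intro h
      rw [sat_wuntl] at h
      rw [sat_untl]
      rcases h with h | ⟨k, hk, hlt⟩
      · obtain ⟨N, hN⟩ := evalB ψ₁ HU HM
        refine ⟨N, Or.inr ?_, fun j _ => h j⟩
        rw [sat_G]
        intro m
        rw [suff_suff]
        exact hN _ (Nat.le_add_left _ _) (h _)
      · exact ⟨k, Or.inl hk, hlt⟩
    · intro h
      rw [sat_untl] at h
      rw [sat_wuntl]
      obtain ⟨k, hk, hlt⟩ := h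
      rcases hk with hk | hk
      · exact Or.inr ⟨k, hk, hlt⟩
      · rw [sat_G] at hk
        refine Or.inl fun j => ?_
        rcases lt_or_ge j k with hj | hj
        · exact hlt j hj
        · have := hk (j - k)
          rw [suff_suff, Nat.sub_add_cancel hj] at this
          exact evalA Hpos ψ₁ j this
  · -- R case
    intro C hC w hw
    obtain ⟨hpos, hneg⟩ := hw
    have Hpos : ∀ ψ : F Ap, GFf ψ ∈ C → ∀ k, ∃ m, Sat (suff w (m + k)) ψ :=
      fun ψ hψ k => sat_GF.1 (hpos _ hψ) k
    have hsub : sf ψ₂ ⊆ sf (F.rel ψ₁ ψ₂) := by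
      intro x hx; rw [sf]; exact Finset.mem_insert_of_mem (Finset.mem_union_right _ hx)
    have HU : ∀ χ ψ : F Ap, F.untl χ ψ ∈ sf ψ₂ → GFf ψ ∉ C →
        ∃ k, ∀ m, ¬ Sat (suff w (m + k)) ψ := by
      intro χ ψ hm hn
      have hmem : GFf ψ ∈ BGF (F.rel ψ₁ ψ₂) := mem_BGF_of_untl (hsub hm)
      have hns := hneg _ hmem hn
      rw [sat_GF] at hns
      push_neg at hns
      exact hns
    have HM : ∀ χ ψ : F Ap, F.srel ψ χ ∈ sf ψ₂ → GFf ψ ∉ C →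
        ∃ k, ∀ m, ¬ Sat (suff w (m + k)) ψ := by
      intro χ ψ hm hn
      have hmem : GFf ψ ∈ BGF (F.rel ψ₁ ψ₂) := mem_BGF_of_srel (hsub hm)
      have hns := hneg _ hmem hn
      rw [sat_GF] at hns
      push_neg at hns
      exact hns
    constructor
    · intro h
      rw [sat_rel] at h
      rw [sat_srel]
      rcases h with h | ⟨k, hk, hle⟩
      · obtain ⟨N, hN⟩ := evalB ψ₂ HU HM
        refine ⟨N, Or.inr ?_, fun j _ => h j⟩
        rw [sat_G]
        intro m
        rw [suff_suff]
        exact hN _ (Nat.le_add_left _ _) (h _)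
      · exact ⟨k, Or.inl hk, hle⟩
    · intro h
      rw [sat_srel] at h
      rw [sat_rel]
      obtain ⟨k, hk, hle⟩ := h
      rcases hk with hk | hk
      · exact Or.inr ⟨k, hk, hle⟩
      · rw [sat_G] at hk
        refine Or.inl fun j => ?_
        rcases le_or_gt j k with hj | hj
        · exact hle j hj
        · have hj' : k ≤ j := le_of_lt hj
          have := hk (j - k)
          rw [suff_suff, Nat.sub_add_cancel hj'] at this
          exact evalA Hpos ψ₂ j this

end LTLNorm
end

section
/- For all extended LTL formulas with placeholders φ₁, φ₂ and all formulas ψ₁, ψ₂: (1) φ₁ W φ₂[ψ₁ U ψ₂] ≡ (φ₁ U φ₂[ψ₁ U ψ₂]) ∨ G φ₁; (2) φ₁[ψ₁ U ψ₂] W φ₂ ≡ (GF ψ₂ ∧ (φ₁[ψ₁ W ψ₂] W φ₂)) ∨ (φ₁[ψ₁ U ψ₂] U (φ₂ ∨ G φ₁[ff])). -/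
namespace ExtLTL

/-- Extended LTL formulas, with the limit operators `GF` and `FG` as atomic
operators. -/
inductive E (Ap : Type) : Type
  | tt    : E Ap
  | ff    : E Ap
  | pos   : Ap → E Ap
  | nlit  : Ap → E Ap
  | and   : E Ap → E Ap → E Ap
  | or    : E Ap → E Ap → E Ap
  | next  : E Ap → E Ap
  | untl  : E Ap → E Ap → E Ap
  | wuntl : E Ap → E Ap → E Ap
  | gf    : E Ap → E Ap
  | fg    : E Ap → E Ap
  deriving DecidableEq

/-- Infinite words over the alphabet `2^Ap`. -/
abbrev Word (Ap : Type) := ℕ → Set Ap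

/-- Suffix of a word starting at position `i`. -/
def suff {Ap : Type} (w : Word Ap) (i : ℕ) : Word Ap := fun n => w (n + i)

/-- Satisfaction relation for extended LTL. -/
def Sat {Ap : Type} : Word Ap → E Ap → Prop
  | _, E.tt => True
  | _, E.ff => False
  | w, E.pos a => a ∈ w 0
  | w, E.nlit a => a ∉ w 0
  | w, E.and φ ψ => Sat w φ ∧ Sat w ψ
  | w, E.or φ ψ => Sat w φ ∨ Sat w ψ
  | w, E.next φ => Sat (suff w 1) φ
  | w, E.untl φ ψ => ∃ k, Sat (suff w k) ψ ∧ ∀ j < k, Sat (suff w j) φ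
  | w, E.wuntl φ ψ => (∀ k, Sat (suff w k) φ) ∨ ∃ k, Sat (suff w k) ψ ∧ ∀ j < k, Sat (suff w j) φ
  | w, E.gf φ => ∀ i : ℕ, ∃ j : ℕ, i ≤ j ∧ Sat (suff w j) φ
  | w, E.fg φ => ∃ i : ℕ, ∀ j : ℕ, i ≤ j → Sat (suff w j) φ

/-- Equivalence of extended LTL formulas. -/
def Equiv {Ap : Type} (φ ψ : E Ap) : Prop := ∀ w : Word Ap, Sat w φ ↔ Sat w ψ

/-- G φ := φ W ff. -/
def Gf {Ap : Type} (φ : E Ap) : E Ap := E.wuntl φ E.ff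

/-- Number of nodes of the syntax tree. -/
def size {Ap : Type} : E Ap → ℕ
  | E.tt => 1
  | E.ff => 1
  | E.pos _ => 1
  | E.nlit _ => 1
  | E.and φ ψ => size φ + size ψ + 1
  | E.or φ ψ => size φ + size ψ + 1
  | E.next φ => size φ + 1
  | E.untl φ ψ => size φ + size ψ + 1
  | E.wuntl φ ψ => size φ + size ψ + 1
  | E.gf φ => size φ + 1
  | E.fg φ => size φ + 1

/-- Formulas with placeholders: extended LTL formulas over `Option Ap`, where
the extra atomic proposition `pos none` is the placeholder `[·]`. -/
abbrev EP (Ap : Type) := E (Option Ap)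

/-- The placeholder occurs only positively (never negated). -/
def posOnly {Ap : Type} : EP Ap → Prop
  | E.nlit none => False
  | E.and φ ψ => posOnly φ ∧ posOnly ψ
  | E.or φ ψ => posOnly φ ∧ posOnly ψ
  | E.next φ => posOnly φ
  | E.untl φ ψ => posOnly φ ∧ posOnly ψ
  | E.wuntl φ ψ => posOnly φ ∧ posOnly ψ
  | E.gf φ => posOnly φ
  | E.fg φ => posOnly φ
  | _ => True

/-- `subst φ ψ = φ[ψ]`: substitute `ψ` for every occurrence of the placeholder
in `φ`. -/
def subst {Ap : Type} : EP Ap → E Ap → E Ap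
  | E.tt, _ => E.tt
  | E.ff, _ => E.ff
  | E.pos none, ψ => ψ
  | E.pos (some a), _ => E.pos a
  | E.nlit none, _ => E.ff    -- never occurs in a formula with positive placeholders
  | E.nlit (some a), _ => E.nlit a
  | E.and φ₁ φ₂, ψ => E.and (subst φ₁ ψ) (subst φ₂ ψ)
  | E.or φ₁ φ₂, ψ => E.or (subst φ₁ ψ) (subst φ₂ ψ)
  | E.next φ, ψ => E.next (subst φ ψ)
  | E.untl φ₁ φ₂, ψ => E.untl (subst φ₁ ψ) (subst φ₂ ψ)
  | E.wuntl φ₁ φ₂, ψ => E.wuntl (subst φ₁ ψ) (subst φ₂ ψ)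
  | E.gf φ, ψ => E.gf (subst φ ψ)
  | E.fg φ, ψ => E.fg (subst φ ψ)

lemma suff_suff {Ap : Type} (w : Word Ap) (i j : ℕ) :
    suff (suff w i) j = suff w (j + i) := by
  funext n; simp [suff, Nat.add_assoc]

/-- Monotonicity of substitution into positive contexts, relative to a
suffix-closed set of words. -/
lemma mono {Ap : Type} (P : Word Ap → Prop) (hP : ∀ v k, P v → P (suff v k))
    {ψ ψ' : E Ap} (h : ∀ v, P v → Sat v ψ → Sat v ψ') :
    ∀ φ : EP Ap, posOnly φ → ∀ v, P v → Sat v (subst φ ψ) → Sat v (subst φ ψ') := by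
  intro φ
  induction φ with
  | tt => intro _ v _ hs; exact hs
  | ff => intro _ v _ hs; exact hs
  | pos a =>
    cases a with
    | none => intro _ v hv hs; exact h v hv hs
    | some a => intro _ v _ hs; exact hs
  | nlit a =>
    cases a with
    | none => intro hpo; exact hpo.elim
    | some a => intro _ v _ hs; exact hs
  | and φ₁ φ₂ ih₁ ih₂ =>
    intro hpo v hv hs
    exact ⟨ih₁ hpo.1 v hv hs.1, ih₂ hpo.2 v hv hs.2⟩
  | or φ₁ φ₂ ih₁ ih₂ =>
    intro hpo v hv hs
    exact hs.imp (ih₁ hpo.1 v hv) (ih₂ hpo.2 v hv)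
  | next φ ih =>
    intro hpo v hv hs
    exact ih hpo _ (hP v 1 hv) hs
  | untl φ₁ φ₂ ih₁ ih₂ =>
    intro hpo v hv hs
    obtain ⟨k, hk, hj⟩ := hs
    exact ⟨k, ih₂ hpo.2 _ (hP v k hv) hk, fun j hj' => ih₁ hpo.1 _ (hP v j hv) (hj j hj')⟩
  | wuntl φ₁ φ₂ ih₁ ih₂ =>
    intro hpo v hv hs
    rcases hs with hall | ⟨k, hk, hj⟩
    · exact Or.inl fun k => ih₁ hpo.1 _ (hP v k hv) (hall k)
    · exact Or.inr ⟨k, ih₂ hpo.2 _ (hP v k hv) hk,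
        fun j hj' => ih₁ hpo.1 _ (hP v j hv) (hj j hj')⟩
  | gf φ ih =>
    intro hpo v hv hs i
    obtain ⟨j, hij, hsj⟩ := hs i
    exact ⟨j, hij, ih hpo _ (hP v j hv) hsj⟩
  | fg φ ih =>
    intro hpo v hv hs
    obtain ⟨i, hi⟩ := hs
    exact ⟨i, fun j hj => ih hpo _ (hP v j hv) (hi j hj)⟩

/-- pulling `U`-subformulas out of `W`-formulas. -/
theorem pull_U_out_of_W {Ap : Type} [Fintype Ap] :
    -- (1)  φ₁ W φ₂[ψ₁ U ψ₂]  ≡  (φ₁ U φ₂[ψ₁ U ψ₂]) ∨ G φ₁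
    (∀ (φ₁ : E Ap) (φ₂ : EP Ap), posOnly φ₂ → ∀ ψ₁ ψ₂ : E Ap,
      Equiv (E.wuntl φ₁ (subst φ₂ (E.untl ψ₁ ψ₂)))
            (E.or (E.untl φ₁ (subst φ₂ (E.untl ψ₁ ψ₂))) (Gf φ₁))) ∧
    -- (2)  φ₁[ψ₁ U ψ₂] W φ₂ ≡ (GF ψ₂ ∧ (φ₁[ψ₁ W ψ₂] W φ₂)) ∨ (φ₁[ψ₁ U ψ₂] U (φ₂ ∨ G φ₁[ff]))
    (∀ (φ₁ : EP Ap) (φ₂ : E Ap), posOnly φ₁ → ∀ ψ₁ ψ₂ : E Ap,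
      Equiv (E.wuntl (subst φ₁ (E.untl ψ₁ ψ₂)) φ₂)
            (E.or
              (E.and (E.gf ψ₂) (E.wuntl (subst φ₁ (E.wuntl ψ₁ ψ₂)) φ₂))
              (E.untl (subst φ₁ (E.untl ψ₁ ψ₂)) (E.or φ₂ (Gf (subst φ₁ E.ff)))))) := by
  constructor
  · -- (1)
    intro φ₁ φ₂ _ ψ₁ ψ₂ w
    constructor
    · rintro (h | h)
      · exact Or.inr (Or.inl h)
      · exact Or.inl h
    · rintro (h | (h | ⟨k, hk, -⟩))
      · exact Or.inr h
      · exact Or.inl h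
      · exact hk.elim
  · -- (2)
    intro φ₁ φ₂ hpo ψ₁ ψ₂ w
    -- U → W always
    have hUW : ∀ v : Word Ap, Sat v (subst φ₁ (E.untl ψ₁ ψ₂)) →
        Sat v (subst φ₁ (E.wuntl ψ₁ ψ₂)) :=
      fun v => mono (ψ := E.untl ψ₁ ψ₂) (ψ' := E.wuntl ψ₁ ψ₂)
        (fun _ => True) (fun _ _ _ => trivial)
        (fun _ _ hs => Or.inr hs) φ₁ hpo v trivial
    -- ff → U always
    have hFU : ∀ v : Word Ap, Sat v (subst φ₁ E.ff) →
        Sat v (subst φ₁ (E.untl ψ₁ ψ₂)) :=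
      fun v => mono (ψ := E.ff) (ψ' := E.untl ψ₁ ψ₂)
        (fun _ => True) (fun _ _ _ => trivial)
        (fun _ _ hs => False.elim hs) φ₁ hpo v trivial
    -- under GF ψ₂, W → U
    have hgfclosed : ∀ (v : Word Ap) (k : ℕ),
        (∀ i, ∃ j, i ≤ j ∧ Sat (suff v j) ψ₂) →
        (∀ i, ∃ j, i ≤ j ∧ Sat (suff (suff v k) j) ψ₂) := by
      intro v k hv i
      obtain ⟨j, hij, hsj⟩ := hv (i + k)
      refine ⟨j - k, by omega, ?_⟩
      rw [suff_suff]
      have : j - k + k = j := by omega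
      rw [this]; exact hsj
    have hWU : ∀ v : Word Ap, (∀ i, ∃ j, i ≤ j ∧ Sat (suff v j) ψ₂) →
        Sat v (subst φ₁ (E.wuntl ψ₁ ψ₂)) → Sat v (subst φ₁ (E.untl ψ₁ ψ₂)) := by
      intro v hv
      refine mono (fun u => ∀ i, ∃ j, i ≤ j ∧ Sat (suff u j) ψ₂) hgfclosed
        ?_ φ₁ hpo v hv
      rintro u hu (hall | hex)
      · obtain ⟨j, -, hsj⟩ := hu 0
        exact ⟨j, hsj, fun m _ => hall m⟩
      · exact hex
    -- with no ψ₂ ever, U → ff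
    have hUF : ∀ v : Word Ap, (∀ m, ¬ Sat (suff v m) ψ₂) →
        Sat v (subst φ₁ (E.untl ψ₁ ψ₂)) → Sat v (subst φ₁ E.ff) := by
      intro v hv
      refine mono (fun u => ∀ m, ¬ Sat (suff u m) ψ₂) ?_ ?_ φ₁ hpo v hv
      · intro u k hu m
        rw [suff_suff]; exact hu (m + k)
      · rintro u hu ⟨m, hm, -⟩
        exact (hu m hm).elim
    constructor
    · rintro (hall | ⟨k, hk, hj⟩)
      · by_cases hgf : ∀ i, ∃ j, i ≤ j ∧ Sat (suff w j) ψ₂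
        · exact Or.inl ⟨hgf, Or.inl fun k => hUW _ (hall k)⟩
        · push_neg at hgf
          obtain ⟨i, hi⟩ := hgf
          refine Or.inr ⟨i, Or.inr (Or.inl fun k => ?_), fun j _ => hall j⟩
          rw [suff_suff]
          refine hUF _ ?_ (hall (k + i))
          intro m
          rw [suff_suff]
          exact hi (m + (k + i)) (by omega)
      · exact Or.inr ⟨k, Or.inl hk, hj⟩
    · rintro (⟨hgf, hW⟩ | ⟨k, hk, hj⟩)
      · rcases hW with hall | ⟨k, hk, hj⟩
        · exact Or.inl fun k => hWU _ (hgfclosed w k hgf) (hall k)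
        · exact Or.inr ⟨k, hk, fun j hj' => hWU _ (hgfclosed w j hgf) (hj j hj')⟩
      · rcases hk with hk | hk
        · exact Or.inr ⟨k, hk, hj⟩
        · rcases hk with hall | ⟨m, hm, -⟩
          · refine Or.inl fun m => ?_
            by_cases hmk : m < k
            · exact hj m hmk
            · refine hFU _ ?_
              have := hall (m - k)
              rw [suff_suff] at this
              have hmk' : m - k + k = m := by omega
              rwa [hmk'] at this
          · exact hm.elim

end ExtLTL
end
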